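/- arXiv:2509.22969 — 3 statements merged into one kernel-verified Lean document; each statement's English description precedes it below -/
import Mathlib

section
/- Let T = [0,1] be cut into finitely many pairwise disjoint intervals T₁, …, T_M whose union is T, let σ be the sigmoid function, and let c₁, …, c_M : ℝ^s → ℝ be continuous. Define f_c : ℝ^s → L²(T, ℝ) by f_c(x)(t) = Σ_{j=1}^M c_j(x) 1_{T_j}(t). Then for every compact set E ⊆ ℝ^s and every ε > 0 there exist m ∈ ℕ and weight and bias functions W¹ : T → ℝ^{m×s}, b : T → ℝ^m, W² : T → ℝ^{1×m} that are constant on each interval T_j, such that the network output D(x)(t) = W²(t) σ(W¹(t) x + b(t)) satisfies sup_{x ∈ E} ‖D(x) − f_c(x)‖_{L²(T,ℝ)} < ε. -/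
open MeasureTheory

set_option maxHeartbeats 1000000

/-- The sigmoid activation function. -/
noncomputable def sigmoid (x : ℝ) : ℝ := 1 / (1 + Real.exp (-x))

lemma exp_dense {s : ℕ} (E : Set (EuclideanSpace ℝ (Fin s))) (hE : IsCompact E)
    (f : EuclideanSpace ℝ (Fin s) → ℝ) (hf : Continuous f) {ε : ℝ} (hε : 0 < ε) :
    ∃ (n : ℕ) (α : Fin n → ℝ) (w : Fin n → Fin s → ℝ),
      ∀ x ∈ E, |∑ q, α q * Real.exp (∑ i, w q i * x i) - f x| < ε := by
  haveI : CompactSpace E := isCompact_iff_compactSpace.mp hE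
  set g : (Fin s → ℝ) → C(E, ℝ) := fun w =>
    ⟨fun x => Real.exp (∑ i, w i * (x : EuclideanSpace ℝ (Fin s)) i),
      Real.continuous_exp.comp (continuous_finset_sum _ fun i _ =>
        continuous_const.mul (by fun_prop))⟩ with hg
  have hgval : ∀ w (x : E), g w x = Real.exp (∑ i, w i * (x : EuclideanSpace ℝ (Fin s)) i) :=
    fun w x => rfl
  set P : Submodule ℝ C(E, ℝ) := Submodule.span ℝ (Set.range g) with hP
  have h1 : (1 : C(E, ℝ)) ∈ P := by
    have : g 0 = 1 := by ext x; simp [hgval]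
    rw [← this]; exact Submodule.subset_span ⟨0, rfl⟩
  have hgmul : ∀ w w', g w * g w' = g (w + w') := by
    intro w w'; ext x
    simp [hgval, ← Real.exp_add, ← Finset.sum_add_distrib, add_mul]
  have key : ∀ x ∈ Set.range g, ∀ b ∈ P, x * b ∈ P := by
    rintro _ ⟨w, rfl⟩ b hb
    refine Submodule.span_induction ?_ ?_ ?_ ?_ hb
    · rintro _ ⟨w', rfl⟩; rw [hgmul]; exact Submodule.subset_span ⟨w + w', rfl⟩
    · simp
    · intro a b _ _ ha hb; rw [mul_add]; exact P.add_mem ha hb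
    · intro r a _ ha; rw [mul_smul_comm]; exact P.smul_mem r ha
  have hmul : ∀ a ∈ P, ∀ b ∈ P, a * b ∈ P := by
    intro a ha
    refine Submodule.span_induction ?_ ?_ ?_ ?_ ha
    · exact key
    · intro b _; simp
    · intro a a' _ _ ha ha' b hb; rw [add_mul]; exact P.add_mem (ha b hb) (ha' b hb)
    · intro r a _ ha b hb; rw [smul_mul_assoc]; exact P.smul_mem r (ha b hb)
  set A : Subalgebra ℝ C(E, ℝ) := P.toSubalgebra h1 (fun a b ha hb => hmul a ha b hb) with hA
  have sep : A.SeparatesPoints := by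
    intro x y hxy
    have hxy' : (x : EuclideanSpace ℝ (Fin s)) ≠ (y : EuclideanSpace ℝ (Fin s)) :=
      Subtype.coe_ne_coe.mpr hxy
    obtain ⟨i0, hi0⟩ : ∃ i, (x : EuclideanSpace ℝ (Fin s)) i ≠ (y : EuclideanSpace ℝ (Fin s)) i := by
      by_contra h; push_neg at h; exact hxy' (WithLp.ofLp_injective 2 (funext h))
    set w : Fin s → ℝ := fun i => (x : EuclideanSpace ℝ (Fin s)) i - (y : EuclideanSpace ℝ (Fin s)) i
      with hw
    refine ⟨g w, ⟨g w, Submodule.subset_span ⟨w, rfl⟩, rfl⟩, fun h => ?_⟩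
    have h' := Real.exp_injective h
    have hz : ∑ i, ((x : EuclideanSpace ℝ (Fin s)) i - (y : EuclideanSpace ℝ (Fin s)) i)^2 = 0 := by
      have := sub_eq_zero.mpr h'
      rw [← Finset.sum_sub_distrib] at this
      calc ∑ i, ((x : EuclideanSpace ℝ (Fin s)) i - (y : EuclideanSpace ℝ (Fin s)) i)^2
          = ∑ i, (w i * (x : EuclideanSpace ℝ (Fin s)) i - w i * (y : EuclideanSpace ℝ (Fin s)) i) := by
            refine Finset.sum_congr rfl fun i _ => by rw [hw]; ring
        _ = 0 := this
    have := (Finset.sum_eq_zero_iff_of_nonneg (fun i _ => sq_nonneg _)).mp hz i0 (Finset.mem_univ _)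
    exact hi0 (sub_eq_zero.mp (pow_eq_zero_iff (by norm_num) |>.mp this))
  obtain ⟨p, hp⟩ := ContinuousMap.exists_mem_subalgebra_near_continuous_of_separatesPoints A sep
    (fun x => f x) (hf.comp continuous_subtype_val) ε hε
  have hpP : (p : C(E, ℝ)) ∈ P := p.2
  rw [Submodule.mem_span_set'] at hpP
  obtain ⟨n, α, v, hv⟩ := hpP
  refine ⟨n, α, fun q => Classical.choose (v q).2, fun x hx => ?_⟩
  have hval : ∀ q, g (Classical.choose (v q).2) = (v q : C(E, ℝ)) :=
    fun q => Classical.choose_spec (v q).2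
  have e1 : (p : C(E, ℝ)) ⟨x, hx⟩
      = ∑ q, α q * Real.exp (∑ i, (Classical.choose (v q).2) i * x i) := by
    rw [← hv, ContinuousMap.coe_sum, Finset.sum_apply]
    refine Finset.sum_congr rfl fun q _ => ?_
    have h3 := DFunLike.congr_fun (hval q) (⟨x, hx⟩ : E)
    simp only [hgval] at h3
    rw [ContinuousMap.smul_apply, ← h3, smul_eq_mul]
  have h2 := hp ⟨x, hx⟩
  rw [Real.norm_eq_abs] at h2
  rw [e1] at h2
  exact h2

lemma sigmoid_near_exp (R : ℝ) {ε : ℝ} (hε : 0 < ε) :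
    ∃ b : ℝ, ∀ u : ℝ, |u| ≤ R → |Real.exp (-b) * sigmoid (u + b) - Real.exp u| < ε := by
  refine ⟨Real.log ε - 2*R - 1, fun u hu => ?_⟩
  set b := Real.log ε - 2*R - 1 with hb
  set A := Real.exp (u + b) with hA
  have hApos : 0 < A := Real.exp_pos _
  have h1 : sigmoid (u + b) = A / (A + 1) := by
    unfold sigmoid
    rw [Real.exp_neg]
    rw [div_eq_div_iff (by positivity) (by positivity)]
    field_simp
    rw [hA]; ring
  have h2 : Real.exp (-b) = Real.exp u / A := by
    rw [eq_div_iff hApos.ne', ← Real.exp_add]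
    ring_nf
  have h3 : Real.exp (-b) * sigmoid (u + b) - Real.exp u = -(Real.exp u * A / (A + 1)) := by
    rw [h1, h2]
    field_simp
    ring
  rw [h3, abs_neg, abs_of_nonneg (by positivity)]
  have h4 : Real.exp u * A / (A + 1) ≤ Real.exp u * A :=
    div_le_self (by positivity) (by linarith)
  have h5 : Real.exp u * A = Real.exp (2*u + b) := by
    rw [← Real.exp_add]; ring_nf
  have h6 : Real.exp (2*u + b) ≤ Real.exp (Real.log ε - 1) := by
    apply Real.exp_le_exp.mpr
    have : u ≤ R := le_trans (le_abs_self u) hu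
    rw [hb]; linarith
  have h7 : Real.exp (Real.log ε - 1) < ε := by
    rw [Real.exp_sub, Real.exp_log hε]
    have he : (1:ℝ) < Real.exp 1 := by
      have := Real.add_one_lt_exp (x := 1) one_ne_zero; linarith
    rw [div_lt_iff₀ (by positivity)]
    nlinarith
  calc Real.exp u * A / (A + 1) ≤ Real.exp u * A := h4
    _ = Real.exp (2*u + b) := h5
    _ ≤ Real.exp (Real.log ε - 1) := h6
    _ < ε := h7

lemma sigmoid_dense {s : ℕ} (E : Set (EuclideanSpace ℝ (Fin s))) (hE : IsCompact E)
    (f : EuclideanSpace ℝ (Fin s) → ℝ) (hf : Continuous f) {ε : ℝ} (hε : 0 < ε) :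
    ∃ (n : ℕ) (a : Fin n → ℝ) (w : Fin n → Fin s → ℝ) (b : Fin n → ℝ),
      ∀ x ∈ E, |∑ q, a q * sigmoid ((∑ i, w q i * x i) + b q) - f x| < ε := by
  obtain ⟨n, α, w, hαw⟩ := exp_dense E hE f hf (half_pos hε)
  -- bound on E
  obtain ⟨C, hC⟩ : ∃ C : ℝ, ∀ x ∈ E, ‖x‖ ≤ C := hE.isBounded.exists_norm_le
  have hcoord : ∀ (x : EuclideanSpace ℝ (Fin s)) (i : Fin s), |x i| ≤ ‖x‖ := by
    intro x i
    rw [EuclideanSpace.norm_eq]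
    calc |x i| = Real.sqrt (|x i|^2) := (Real.sqrt_sq (abs_nonneg _)).symm
      _ ≤ _ := by
          apply Real.sqrt_le_sqrt
          rw [sq_abs]
          have : ∀ j : Fin s, ‖x j‖^2 = (x j)^2 := fun j => by rw [Real.norm_eq_abs, sq_abs]
          calc (x i)^2 = ‖x i‖^2 := by rw [Real.norm_eq_abs, sq_abs]
            _ ≤ ∑ j, ‖x j‖^2 := Finset.single_le_sum (f := fun j => ‖x j‖^2)
                (fun j _ => sq_nonneg _) (Finset.mem_univ i)
  set K := (∑ q : Fin n, ∑ i, |w q i|) * (|C| + 1) with hK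
  have hKb : ∀ x ∈ E, ∀ q : Fin n, |∑ i, w q i * x i| ≤ K := by
    intro x hx q
    calc |∑ i, w q i * x i| ≤ ∑ i, |w q i * x i| := Finset.abs_sum_le_sum_abs _ _
      _ ≤ ∑ i, |w q i| * (|C| + 1) := by
          refine Finset.sum_le_sum fun i _ => ?_
          rw [abs_mul]
          refine mul_le_mul_of_nonneg_left ?_ (abs_nonneg _)
          have := (hcoord x i).trans (hC x hx)
          have : ‖x‖ ≤ |C| := le_trans (hC x hx) (le_abs_self C)
          calc |x i| ≤ ‖x‖ := hcoord x i
            _ ≤ |C| + 1 := by linarith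
      _ = (∑ i, |w q i|) * (|C| + 1) := by rw [← Finset.sum_mul]
      _ ≤ K := by
          rw [hK]
          refine mul_le_mul_of_nonneg_right ?_ (by positivity)
          exact Finset.single_le_sum (f := fun q' => ∑ i, |w q' i|)
            (fun q' _ => Finset.sum_nonneg fun i _ => abs_nonneg _) (Finset.mem_univ q)
  set S := ∑ q : Fin n, |α q| with hS
  have hSnn : 0 ≤ S := Finset.sum_nonneg fun q _ => abs_nonneg _
  have hδ : 0 < ε / (2 * (S + 1)) := by positivity
  obtain ⟨b0, hb0⟩ := sigmoid_near_exp K hδ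
  refine ⟨n, fun q => α q * Real.exp (-b0), w, fun _ => b0, fun x hx => ?_⟩
  have herr : ∀ q : Fin n,
      |α q * Real.exp (-b0) * sigmoid ((∑ i, w q i * x i) + b0)
        - α q * Real.exp (∑ i, w q i * x i)| ≤ |α q| * (ε / (2 * (S + 1))) := by
    intro q
    have := hb0 _ (hKb x hx q)
    calc |α q * Real.exp (-b0) * sigmoid ((∑ i, w q i * x i) + b0)
          - α q * Real.exp (∑ i, w q i * x i)|
        = |α q| * |Real.exp (-b0) * sigmoid ((∑ i, w q i * x i) + b0)
            - Real.exp (∑ i, w q i * x i)| := by rw [← abs_mul]; ring_nf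
      _ ≤ |α q| * (ε / (2 * (S + 1))) :=
          mul_le_mul_of_nonneg_left this.le (abs_nonneg _)
  have hsum : |∑ q, α q * Real.exp (-b0) * sigmoid ((∑ i, w q i * x i) + b0)
      - ∑ q, α q * Real.exp (∑ i, w q i * x i)| ≤ S * (ε / (2 * (S + 1))) := by
    rw [← Finset.sum_sub_distrib]
    calc _ ≤ ∑ q, |α q * Real.exp (-b0) * sigmoid ((∑ i, w q i * x i) + b0)
          - α q * Real.exp (∑ i, w q i * x i)| := Finset.abs_sum_le_sum_abs _ _
      _ ≤ ∑ q, |α q| * (ε / (2 * (S + 1))) := Finset.sum_le_sum fun q _ => herr q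
      _ = S * (ε / (2 * (S + 1))) := by rw [← Finset.sum_mul]
  have hS2 : S * (ε / (2 * (S + 1))) < ε / 2 :=
    calc S * (ε / (2 * (S + 1))) = (ε / 2) * (S / (S + 1)) := by
          field_simp
      _ < (ε / 2) * 1 := by
          exact mul_lt_mul_of_pos_left ((div_lt_one (by positivity)).mpr (by linarith))
            (by positivity)
      _ = ε / 2 := mul_one _
  have h2 := hαw x hx
  calc |∑ q, α q * Real.exp (-b0) * sigmoid ((∑ i, w q i * x i) + b0) - f x|
      ≤ |∑ q, α q * Real.exp (-b0) * sigmoid ((∑ i, w q i * x i) + b0)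
          - ∑ q, α q * Real.exp (∑ i, w q i * x i)|
        + |∑ q, α q * Real.exp (∑ i, w q i * x i) - f x| := by
          exact abs_sub_le _ _ _
    _ < ε / 2 + ε / 2 := by
        apply add_lt_add_of_le_of_lt (hsum.trans hS2.le) h2
    _ = ε := add_halves ε

/-- Property 1 of the paper: continuous maps from `ℝ^s` into piecewise constant functions
over a finite interval partition of `[0,1]` can be uniformly approximated (on compact sets,
in `L²([0,1],ℝ)` norm) by one-hidden-layer functional networks whose weight and bias
functions are constant on each interval of the partition. -/
theorem stmt_1 (s : ℕ) (hs : 1 ≤ s)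
    (M : ℕ) (T : Fin M → Set ℝ)
    (hTint : ∀ j, (T j).OrdConnected)
    (hdisj : ∀ j k, j ≠ k → Disjoint (T j) (T k))
    (hunion : (⋃ j, T j) = Set.Icc (0:ℝ) 1)
    (c : Fin M → EuclideanSpace ℝ (Fin s) → ℝ) (hc : ∀ j, Continuous (c j))
    (E : Set (EuclideanSpace ℝ (Fin s))) (hE : IsCompact E)
    (ε : ℝ) (hε : 0 < ε) :
    ∃ (m : ℕ) (W1 : ℝ → Matrix (Fin m) (Fin s) ℝ) (b : ℝ → Fin m → ℝ)
      (W2 : ℝ → Matrix (Fin 1) (Fin m) ℝ),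
      (∀ j, ∀ t₁ ∈ T j, ∀ t₂ ∈ T j, W1 t₁ = W1 t₂ ∧ b t₁ = b t₂ ∧ W2 t₁ = W2 t₂) ∧
      ∀ x ∈ E,
        eLpNorm
          (fun t =>
            ((W2 t).mulVec fun q => sigmoid ((W1 t).mulVec (fun j => x j) q + b t q)) 0 -
              ∑ j, c j x * (T j).indicator (fun _ => (1:ℝ)) t)
          2 (volume.restrict (Set.Icc (0:ℝ) 1)) < ENNReal.ofReal ε := by
  classical
  have H : ∀ j : Fin M, ∃ (n : ℕ) (a : Fin n → ℝ) (w : Fin n → Fin s → ℝ) (b : Fin n → ℝ),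
      ∀ x ∈ E, |∑ q, a q * sigmoid ((∑ i, w q i * x i) + b q) - c j x| < ε / 2 :=
    fun j => sigmoid_dense E hE (c j) (hc j) (half_pos hε)
  choose n a wf bf hnet using H
  set ι := (j : Fin M) × Fin (n j) with hι
  set e : ι ≃ Fin (Fintype.card ι) := Fintype.equivFin ι with he
  set m := Fintype.card ι with hm
  have uniq : ∀ {t : ℝ} {j k : Fin M}, t ∈ T j → t ∈ T k → j = k := by
    intro t j k hj hk
    by_contra hne
    exact Set.disjoint_left.mp (hdisj j k hne) hj hk
  set W1 : ℝ → Matrix (Fin m) (Fin s) ℝ :=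
    fun _ q i => wf (e.symm q).1 (e.symm q).2 i with hW1
  set b : ℝ → Fin m → ℝ := fun _ q => bf (e.symm q).1 (e.symm q).2 with hbdef
  set W2 : ℝ → Matrix (Fin 1) (Fin m) ℝ := fun t _ q =>
    if h : ∃ j, t ∈ T j then
      (if h.choose = (e.symm q).1 then a (e.symm q).1 (e.symm q).2 else 0) else 0 with hW2
  refine ⟨m, W1, b, W2, ?_, ?_⟩
  · intro j t₁ ht₁ t₂ ht₂
    refine ⟨rfl, rfl, ?_⟩
    have h₁ : ∃ k, t₁ ∈ T k := ⟨j, ht₁⟩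
    have h₂ : ∃ k, t₂ ∈ T k := ⟨j, ht₂⟩
    have e₁ : h₁.choose = j := uniq h₁.choose_spec ht₁
    have e₂ : h₂.choose = j := uniq h₂.choose_spec ht₂
    funext i q
    simp only [hW2, dif_pos h₁, dif_pos h₂, e₁, e₂]
  · intro x hx
    have hpt : ∀ t ∈ Set.Icc (0:ℝ) 1,
        ‖((W2 t).mulVec fun q => sigmoid ((W1 t).mulVec (fun j => x j) q + b t q)) 0 -
          ∑ j, c j x * (T j).indicator (fun _ => (1:ℝ)) t‖ ≤ ε/2 := by
      intro t ht
      have htU : t ∈ ⋃ j, T j := hunion.symm ▸ ht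
      obtain ⟨j, htj⟩ := Set.mem_iUnion.mp htU
      have hex : ∃ k, t ∈ T k := ⟨j, htj⟩
      have hch : hex.choose = j := uniq hex.choose_spec htj
      -- target equals c j x
      have htar : ∑ k, c k x * (T k).indicator (fun _ => (1:ℝ)) t = c j x := by
        rw [Finset.sum_eq_single j]
        · rw [Set.indicator_of_mem htj, mul_one]
        · intro k _ hk
          rw [Set.indicator_of_notMem (fun hmem => hk (uniq htj hmem).symm), mul_zero]
        · intro h; exact absurd (Finset.mem_univ j) h
      -- network value
      have hval : ((W2 t).mulVec fun q => sigmoid ((W1 t).mulVec (fun i => x i) q + b t q)) 0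
          = ∑ r : Fin (n j), a j r * sigmoid ((∑ i, wf j r i * x i) + bf j r) := by
        simp only [Matrix.mulVec, dotProduct, hW1, hW2, hbdef, dif_pos hex, hch]
        calc ∑ q : Fin m, (if j = (e.symm q).1 then a (e.symm q).1 (e.symm q).2 else 0)
              * sigmoid ((∑ i, wf (e.symm q).1 (e.symm q).2 i * x i) + bf (e.symm q).1 (e.symm q).2)
            = ∑ p : ι, (if j = p.1 then a p.1 p.2 else 0)
              * sigmoid ((∑ i, wf p.1 p.2 i * x i) + bf p.1 p.2) :=
              Equiv.sum_comp e.symm (fun p : ι => (if j = p.1 then a p.1 p.2 else 0)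
                * sigmoid ((∑ i, wf p.1 p.2 i * x i) + bf p.1 p.2))
          _ = ∑ k : Fin M, ∑ r : Fin (n k), (if j = k then a k r else 0)
              * sigmoid ((∑ i, wf k r i * x i) + bf k r) := by
              rw [← Finset.univ_sigma_univ, Finset.sum_sigma]
          _ = ∑ r : Fin (n j), a j r * sigmoid ((∑ i, wf j r i * x i) + bf j r) := by
              rw [Finset.sum_eq_single j]
              · simp
              · intro k _ hk
                simp [if_neg (Ne.symm hk)]
              · intro h; exact absurd (Finset.mem_univ j) h
      rw [hval, htar, Real.norm_eq_abs]
      exact (hnet j x hx).le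
    have hb : ∀ᵐ t ∂(volume.restrict (Set.Icc (0:ℝ) 1)),
        ‖((W2 t).mulVec fun q => sigmoid ((W1 t).mulVec (fun j => x j) q + b t q)) 0 -
          ∑ j, c j x * (T j).indicator (fun _ => (1:ℝ)) t‖ ≤ ε/2 :=
      (ae_restrict_iff' measurableSet_Icc).mpr (Filter.Eventually.of_forall hpt)
    have hle := eLpNorm_le_of_ae_bound (p := 2) hb
    have hμ : (volume.restrict (Set.Icc (0:ℝ) 1)) Set.univ = 1 := by
      rw [Measure.restrict_apply_univ, Real.volume_Icc]
      norm_num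
    rw [hμ, ENNReal.one_rpow, one_mul] at hle
    refine lt_of_le_of_lt hle ?_
    rw [ENNReal.ofReal_lt_ofReal_iff hε]; linarith
end

section
/- Let n ≥ 1, x ∈ ℝ^n, and suppose s_{ij} > 0 for all 1 ≤ i < j ≤ n. Then there exists λ₀ ≥ 0 such that for every λ ≥ λ₀ the unique minimizer over u ∈ ℝ^n of the convex clustering objective L₁(u) = (1/n) ‖x − u‖² + λ Σ_{1≤i<j≤n} s_{ij} |u_i − u_j| is the constant vector u = (x̄, …, x̄), where x̄ = (1/n) Σ_{i=1}^n x_i. -/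
/-- The per-coordinate convex clustering objective of the paper:
`L₁(u) = (1/n) ‖x − u‖² + λ Σ_{i<j} s_{ij} |u_i − u_j|`. -/
noncomputable def convexClusterObj (n : ℕ) (x : Fin n → ℝ) (s : Fin n → Fin n → ℝ)
    (lam : ℝ) (u : Fin n → ℝ) : ℝ :=
  (1 / n) * (∑ i, (x i - u i) ^ 2) +
    lam * ∑ i, ∑ j, if i < j then s i j * |u i - u j| else 0

/-- With strictly positive similarity weights, for all sufficiently large `λ` the unique
minimizer of the convex clustering objective is the constant vector at the overall mean:
all cluster centroids coalesce into a single cluster. -/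
theorem stmt_6 (n : ℕ) (hn : 1 ≤ n) (x : Fin n → ℝ)
    (s : Fin n → Fin n → ℝ) (hs : ∀ i j, i < j → 0 < s i j) :
    ∃ lam₀ : ℝ, 0 ≤ lam₀ ∧ ∀ lam : ℝ, lam₀ ≤ lam →
      (∀ v : Fin n → ℝ,
        convexClusterObj n x s lam (fun _ => (n : ℝ)⁻¹ * ∑ i, x i) ≤
          convexClusterObj n x s lam v) ∧
      (∀ u : Fin n → ℝ,
        (∀ v : Fin n → ℝ, convexClusterObj n x s lam u ≤ convexClusterObj n x s lam v) →
          u = fun _ => (n : ℝ)⁻¹ * ∑ i, x i) := by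
  have hn0 : (0:ℝ) < (n:ℝ) := by exact_mod_cast hn
  have hn0' : (n:ℝ) ≠ 0 := ne_of_gt hn0
  set xb : ℝ := (n:ℝ)⁻¹ * ∑ i, x i with hxbdef
  have hne : (Finset.univ : Finset (Fin n)).Nonempty := ⟨⟨0, hn⟩, Finset.mem_univ _⟩
  have hpne : (Finset.univ : Finset (Fin n × Fin n)).Nonempty :=
    ⟨(⟨0, hn⟩, ⟨0, hn⟩), Finset.mem_univ _⟩
  set M : ℝ := Finset.univ.sup' hne (fun i => |x i - xb|) with hMdef
  have hMle : ∀ i, |x i - xb| ≤ M := by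
    intro i; rw [hMdef]; exact Finset.le_sup' (fun i => |x i - xb|) (Finset.mem_univ i)
  have hM0 : 0 ≤ M := le_trans (abs_nonneg (x ⟨0, hn⟩ - xb)) (hMle ⟨0, hn⟩)
  set smin : ℝ := Finset.univ.inf' hpne (fun p => if p.1 < p.2 then s p.1 p.2 else 1)
    with hsmindef
  have hsmin_pos : 0 < smin := by
    rw [hsmindef, Finset.lt_inf'_iff]
    intro p _
    split
    · exact hs _ _ ‹_›
    · norm_num
  have hsmin_le : ∀ i j : Fin n, i < j → smin ≤ s i j := by
    intro i j hij
    have h := Finset.inf'_le (f := fun p : Fin n × Fin n => if p.1 < p.2 then s p.1 p.2 else 1)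
      (b := (i, j)) (Finset.mem_univ _)
    rw [hsmindef]
    exact h.trans (le_of_eq (by simp [hij]))
  have hxs : ∑ i, (x i - xb) = 0 := by
    have h : ∑ i, (x i - xb) = (∑ i, x i) - (n:ℝ) * xb := by
      rw [Finset.sum_sub_distrib, Finset.sum_const, Finset.card_univ, Fintype.card_fin,
        nsmul_eq_mul]
    rw [h, hxbdef]
    field_simp
    ring
  refine ⟨4 * M / ((n:ℝ)^2 * smin), by positivity, fun lam hlam => ?_⟩
  have hlam0 : 0 ≤ lam := le_trans (by positivity) hlam
  have key : ∀ v : Fin n → ℝ,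
      convexClusterObj n x s lam (fun _ => xb)
        + ((n:ℝ)⁻¹ * ∑ i, (v i - xb))^2
        + (1/(n:ℝ)) * ∑ i, (v i - xb - (n:ℝ)⁻¹ * ∑ j, (v j - xb))^2
      ≤ convexClusterObj n x s lam v := by
    intro v
    set c : ℝ := (n:ℝ)⁻¹ * ∑ i, (v i - xb) with hc
    set e : Fin n → ℝ := fun i => v i - xb - c with he
    have hve : ∀ i, v i = xb + c + e i := by intro i; simp [he]
    have hes : ∑ i, e i = 0 := by
      have h : ∑ i, e i = (∑ i, (v i - xb)) - (n:ℝ) * c := by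
        simp only [he]
        rw [Finset.sum_sub_distrib, Finset.sum_const, Finset.card_univ, Fintype.card_fin,
          nsmul_eq_mul]
      rw [h, hc]
      field_simp
      ring
    have hquad : ∑ i, (x i - v i)^2
        = ∑ i, (x i - xb)^2 + (n:ℝ) * c^2 + ∑ i, (e i)^2 - 2 * ∑ i, (x i - xb) * e i := by
      have expand : ∑ i, (x i - v i)^2
          = ∑ i, (((x i - xb)^2 + (e i)^2 - 2 * ((x i - xb) * e i))
              + ((-2*c) * (x i - xb) + (2*c) * (e i) + c^2)) := by
        refine Finset.sum_congr rfl fun i _ => ?_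
        rw [hve i]; ring
      rw [expand]
      rw [Finset.sum_add_distrib, Finset.sum_add_distrib, Finset.sum_add_distrib,
        Finset.sum_sub_distrib, Finset.sum_add_distrib, ← Finset.mul_sum, ← Finset.mul_sum,
        ← Finset.mul_sum, hxs, hes, Finset.sum_const, Finset.card_univ, Fintype.card_fin,
        nsmul_eq_mul]
      ring
    -- T : unweighted penalty on e
    set T : ℝ := ∑ i, ∑ j, if i < j then |e i - e j| else 0 with hT
    have hT0 : 0 ≤ T := by
      apply Finset.sum_nonneg; intro i _
      apply Finset.sum_nonneg; intro j _
      split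
      · exact abs_nonneg _
      · exact le_rfl
    have hstep : (n:ℝ) * ∑ i, |e i| ≤ 2 * T := by
      have hni : ∀ i, (n:ℝ) * |e i| ≤ ∑ j, |e i - e j| := by
        intro i
        have h : (n:ℝ) * e i = ∑ j : Fin n, (e i - e j) := by
          rw [Finset.sum_sub_distrib, hes, Finset.sum_const, Finset.card_univ, Fintype.card_fin,
            nsmul_eq_mul]
          ring
        calc (n:ℝ) * |e i| = |(n:ℝ) * e i| := by
              rw [abs_mul, abs_of_nonneg hn0.le]
          _ = |∑ j : Fin n, (e i - e j)| := by rw [h]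
          _ ≤ ∑ j, |e i - e j| := Finset.abs_sum_le_sum_abs _ _
      have hsum : (n:ℝ) * ∑ i, |e i| ≤ ∑ i, ∑ j, |e i - e j| := by
        rw [Finset.mul_sum]
        exact Finset.sum_le_sum fun i _ => hni i
      have hsym : ∑ i, ∑ j, |e i - e j| = 2 * T := by
        have hsplit : ∀ i j : Fin n, |e i - e j|
            = (if i < j then |e i - e j| else 0) + (if j < i then |e j - e i| else 0) := by
          intro i j
          rcases lt_trichotomy i j with h | h | h
          · simp [h, not_lt_of_gt h]
          · subst h; simp
          · simp [h, not_lt_of_gt h, abs_sub_comm]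
        calc ∑ i, ∑ j, |e i - e j|
            = ∑ i, ∑ j, ((if i < j then |e i - e j| else 0)
                + (if j < i then |e j - e i| else 0)) :=
              Finset.sum_congr rfl fun i _ => Finset.sum_congr rfl fun j _ => hsplit i j
          _ = T + ∑ i, ∑ j, (if j < i then |e j - e i| else 0) := by
              rw [← Finset.sum_add_distrib]
              refine Finset.sum_congr rfl fun i _ => ?_
              rw [Finset.sum_add_distrib]
          _ = T + T := by rw [Finset.sum_comm]
          _ = 2 * T := by ring
      linarith [hsum, hsym.le, hsym.ge]
    have h2 : |∑ i, (x i - xb) * e i| ≤ M * ∑ i, |e i| := by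
      calc |∑ i, (x i - xb) * e i| ≤ ∑ i, |(x i - xb) * e i| := Finset.abs_sum_le_sum_abs _ _
        _ = ∑ i, |x i - xb| * |e i| := by simp [abs_mul]
        _ ≤ ∑ i, M * |e i| :=
            Finset.sum_le_sum fun i _ => mul_le_mul_of_nonneg_right (hMle i) (abs_nonneg _)
        _ = M * ∑ i, |e i| := (Finset.mul_sum _ _ _).symm
    set PE : ℝ := ∑ i, ∑ j, if i < j then s i j * |e i - e j| else 0 with hPE
    have hT1 : smin * T ≤ PE := by
      rw [hT, hPE, Finset.mul_sum]
      refine Finset.sum_le_sum fun i _ => ?_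
      rw [Finset.mul_sum]
      refine Finset.sum_le_sum fun j _ => ?_
      split
      · exact mul_le_mul_of_nonneg_right (hsmin_le i j ‹_›) (abs_nonneg _)
      · simp
    have hcross : 2 / (n:ℝ) * ∑ i, (x i - xb) * e i ≤ lam * PE := by
      have h3 : ∑ i, (x i - xb) * e i ≤ M * (2 / (n:ℝ) * T) := by
        have hee : ∑ i, |e i| ≤ 2 / (n:ℝ) * T := by
          rw [div_mul_eq_mul_div, le_div_iff₀ hn0]
          linarith [hstep]
        calc ∑ i, (x i - xb) * e i ≤ |∑ i, (x i - xb) * e i| := le_abs_self _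
          _ ≤ M * ∑ i, |e i| := h2
          _ ≤ M * (2 / (n:ℝ) * T) := mul_le_mul_of_nonneg_left hee hM0
      have h4 : 2 / (n:ℝ) * ∑ i, (x i - xb) * e i ≤ 4 * M / (n:ℝ)^2 * T := by
        have := mul_le_mul_of_nonneg_left h3 (by positivity : (0:ℝ) ≤ 2 / (n:ℝ))
        calc 2 / (n:ℝ) * ∑ i, (x i - xb) * e i ≤ 2 / (n:ℝ) * (M * (2 / (n:ℝ) * T)) := this
          _ = 4 * M / (n:ℝ)^2 * T := by field_simp; ring
      have h5 : 4 * M / (n:ℝ)^2 * T ≤ lam * PE := by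
        have hlam₀eq : 4 * M / (n:ℝ)^2 * T = (4 * M / ((n:ℝ)^2 * smin)) * (smin * T) := by
          field_simp
        have hst : 0 ≤ smin * T := mul_nonneg hsmin_pos.le hT0
        calc 4 * M / (n:ℝ)^2 * T = (4 * M / ((n:ℝ)^2 * smin)) * (smin * T) := hlam₀eq
          _ ≤ lam * (smin * T) := mul_le_mul_of_nonneg_right hlam hst
          _ ≤ lam * PE := mul_le_mul_of_nonneg_left hT1 hlam0
      linarith
    have hveq : ∀ i j : Fin n, v i - v j = e i - e j := by
      intro i j; rw [hve i, hve j]; ring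
    have hpenv : (∑ i, ∑ j, if i < j then s i j * |v i - v j| else 0) = PE := by
      rw [hPE]
      refine Finset.sum_congr rfl fun i _ => Finset.sum_congr rfl fun j _ => ?_
      rw [hveq i j]
    have hgoal_e : ∀ i, v i - xb - c = e i := fun i => rfl
    show convexClusterObj n x s lam (fun _ => xb) + c^2
        + (1/(n:ℝ)) * ∑ i, (v i - xb - c)^2 ≤ convexClusterObj n x s lam v
    rw [convexClusterObj, convexClusterObj, hpenv]
    simp only [hgoal_e]
    have hpenu : (∑ i : Fin n, ∑ j : Fin n,
        if i < j then s i j * |xb - xb| else 0) = 0 := by simp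
    rw [hpenu, hquad]
    have hrhs : (1/(n:ℝ)) * (∑ i, (x i - xb)^2 + (n:ℝ) * c^2 + ∑ i, (e i)^2
          - 2 * ∑ i, (x i - xb) * e i)
        = (1/(n:ℝ)) * ∑ i, (x i - xb)^2 + c^2 + (1/(n:ℝ)) * ∑ i, (e i)^2
          - 2 / (n:ℝ) * ∑ i, (x i - xb) * e i := by
      field_simp
    rw [hrhs]
    push_cast
    linarith [hcross]
  constructor
  · intro v
    have h := key v
    have h1 : 0 ≤ ((n:ℝ)⁻¹ * ∑ i, (v i - xb))^2 := sq_nonneg _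
    have h2 : 0 ≤ (1/(n:ℝ)) * ∑ i, (v i - xb - (n:ℝ)⁻¹ * ∑ j, (v j - xb))^2 := by
      apply mul_nonneg (by positivity)
      exact Finset.sum_nonneg fun i _ => sq_nonneg _
    linarith
  · intro u hu
    have h1 := hu (fun _ => xb)
    have h2 := key u
    set c : ℝ := (n:ℝ)⁻¹ * ∑ i, (u i - xb) with hc
    have ha : 0 ≤ c^2 := sq_nonneg _
    have hbsum : 0 ≤ ∑ i, (u i - xb - c)^2 := Finset.sum_nonneg fun i _ => sq_nonneg _
    have hb : 0 ≤ (1/(n:ℝ)) * ∑ i, (u i - xb - c)^2 := mul_nonneg (by positivity) hbsum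
    have hzero : c^2 + (1/(n:ℝ)) * ∑ i, (u i - xb - c)^2 = 0 := by linarith
    have hc0 : c = 0 := by
      have : c^2 = 0 := by nlinarith
      exact pow_eq_zero_iff (by norm_num) |>.mp this
    have hsum0 : ∑ i, (u i - xb - c)^2 = 0 := by
      have hS : (1/(n:ℝ)) * ∑ i, (u i - xb - c)^2 = 0 := by linarith
      rcases mul_eq_zero.mp hS with h | h
      · exact absurd h (by positivity)
      · exact h
    have he0 : ∀ i, u i - xb - c = 0 := by
      intro i
      have := (Finset.sum_eq_zero_iff_of_nonneg fun j _ => sq_nonneg (u j - xb - c)).mp hsum0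
        i (Finset.mem_univ i)
      exact pow_eq_zero_iff (by norm_num) |>.mp this
    funext i
    show u i = xb
    have h5 := he0 i
    rw [hc0] at h5
    linarith
end

section
/- Let y : [0,1] → ℝ^p be continuously differentiable and let h : [0,1] → [0,1] be continuously differentiable with h(0) = 0, h(1) = 1 and h'(t) > 0 for all t ∈ [0,1]. Define the square-root velocity transform SRV(y)(t) = y'(t)/√(‖y'(t)‖) if ‖y'(t)‖ ≠ 0 and SRV(y)(t) = 0 otherwise, where ‖·‖ is the Euclidean norm on ℝ^p. Then for every t ∈ [0,1], SRV(y ∘ h)(t) = SRV(y)(h(t)) · √(h'(t)). -/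
/-- Pointwise square-root velocity map: `srv v = v / √‖v‖` if `v ≠ 0`, else `0`.
The SRV representation of a curve `y` is `t ↦ srv (y'(t))`. -/
noncomputable def srv {p : ℕ} (v : EuclideanSpace ℝ (Fin p)) : EuclideanSpace ℝ (Fin p) :=
  if ‖v‖ = 0 then 0 else (Real.sqrt ‖v‖)⁻¹ • v

lemma srv_smul {p : ℕ} (c : ℝ) (hc : 0 < c) (v : EuclideanSpace ℝ (Fin p)) :
    srv (c • v) = Real.sqrt c • srv v := by
  unfold srv
  by_cases hv : ‖v‖ = 0
  · simp [hv, norm_smul, abs_of_pos hc]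
  · have hcv : ‖c • v‖ = c * ‖v‖ := by rw [norm_smul, Real.norm_eq_abs, abs_of_pos hc]
    have hcv0 : ‖c • v‖ ≠ 0 := by
      rw [hcv]; exact mul_ne_zero hc.ne' hv
    rw [if_neg hcv0, if_neg hv, hcv, Real.sqrt_mul hc.le, smul_smul, smul_smul]
    congr 1
    have hsc : Real.sqrt c ≠ 0 := Real.sqrt_ne_zero'.2 hc
    have hsv : Real.sqrt ‖v‖ ≠ 0 := Real.sqrt_ne_zero'.2 (lt_of_le_of_ne (norm_nonneg v) (Ne.symm hv))
    have hc2 : Real.sqrt c * Real.sqrt c = c := Real.mul_self_sqrt hc.le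
    field_simp
    rw [sq, hc2]

/-- Transformation rule of the square-root velocity representation under
re-parameterization by an orientation-preserving diffeomorphism `h` of `[0,1]`:
`SRV(y ∘ h)(t) = SRV(y)(h(t)) √(h'(t))`. -/
theorem stmt_11 (p : ℕ) (y y' : ℝ → EuclideanSpace ℝ (Fin p)) (h h' : ℝ → ℝ)
    (hy : ∀ t ∈ Set.Icc (0:ℝ) 1, HasDerivWithinAt y (y' t) (Set.Icc (0:ℝ) 1) t)
    (hy'c : ContinuousOn y' (Set.Icc (0:ℝ) 1))
    (hmaps : Set.MapsTo h (Set.Icc (0:ℝ) 1) (Set.Icc (0:ℝ) 1))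
    (hh : ∀ t ∈ Set.Icc (0:ℝ) 1, HasDerivWithinAt h (h' t) (Set.Icc (0:ℝ) 1) t)
    (hh'c : ContinuousOn h' (Set.Icc (0:ℝ) 1))
    (h0 : h 0 = 0) (h1 : h 1 = 1) (hpos : ∀ t ∈ Set.Icc (0:ℝ) 1, 0 < h' t)
    (g' : ℝ → EuclideanSpace ℝ (Fin p))
    (hg : ∀ t ∈ Set.Icc (0:ℝ) 1, HasDerivWithinAt (y ∘ h) (g' t) (Set.Icc (0:ℝ) 1) t) :
    ∀ t ∈ Set.Icc (0:ℝ) 1, srv (g' t) = Real.sqrt (h' t) • srv (y' (h t)) := by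
  intro t ht
  have hchain : HasDerivWithinAt (y ∘ h) (h' t • y' (h t)) (Set.Icc (0:ℝ) 1) t :=
    HasDerivWithinAt.scomp t (hy (h t) (hmaps ht)) (hh t ht) hmaps
  have huniq : UniqueDiffWithinAt ℝ (Set.Icc (0:ℝ) 1) t :=
    uniqueDiffOn_Icc zero_lt_one t ht
  have heq : g' t = h' t • y' (h t) := huniq.eq_deriv _ (hg t ht) hchain
  rw [heq, srv_smul _ (hpos t ht)]
end
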